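/- Let G be a finite perfect group and E a representation group of G (a stem extension π : E ↠ G, ker π ⊆ Z(E) ∩ [E,E], of maximal order among stem extensions of G). Then for every normalized 3-cocycle ω on E with values in ℂˣ and every subgroup B ⊆ Z(E), the subgroup B is ω-admissible: there exists an ω-admissible pair (τ, ν) for B. In particular, for every g ∈ Z(E), the 2-cocycle θ_g on E is a 2-coboundary of E. -/

import Mathlib

set_option maxHeartbeats 1000000
set_option synthInstance.maxHeartbeats 1000000


/-- Conjugation: `g^x = x⁻¹ * g * x`. -/
def cjg {G : Type*} [Group G] (g x : G) : G := x⁻¹ * g * x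

/-- A normalized 3-cocycle on `G` with values in `ℂˣ`. -/
def IsNormalized3Cocycle {G : Type*} [Group G] (ω : G → G → G → ℂˣ) : Prop :=
  (∀ x y z w, ω y z w * ω x (y * z) w * ω x y z = ω (x * y) z w * ω x y (z * w)) ∧
  (∀ x y z, (x = 1 ∨ y = 1 ∨ z = 1) → ω x y z = 1)

/-- `θ_g(x,y) = ω(g,x,y)·ω(x,y,g^{xy}) / ω(x,g^x,y)`. -/
def theta {G : Type*} [Group G] (ω : G → G → G → ℂˣ) (g x y : G) : ℂˣ :=
  ω g x y * ω x y (cjg g (x * y)) / ω x (cjg g x) y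

/-- `γ_g(x,y) = ω(x,y,g)·ω(g,x^g,y^g) / ω(x,g,y^g)`. -/
def gam {G : Type*} [Group G] (ω : G → G → G → ℂˣ) (g x y : G) : ℂˣ :=
  ω x y g * ω g (cjg x g) (cjg y g) / ω x g (cjg y g)

/-- A 2-coboundary of `G` with values in `ℂˣ`. -/
def Is2Coboundary {G : Type*} [Group G] (β : G → G → ℂˣ) : Prop :=
  ∃ f : G → ℂˣ, f 1 = 1 ∧ ∀ x y, β x y = f x * f y / f (x * y)

/-- A (normalized) 2-cocycle of `G` with values in `ℂˣ`. -/
def Is2Cocycle {G : Type*} [Group G] (β : G → G → ℂˣ) : Prop :=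
  (∀ x, β x 1 = 1 ∧ β 1 x = 1) ∧
  (∀ x y z, β x y * β (x * y) z = β y z * β x (y * z))

/-- An ω-admissible pair `(τ, ν)` for a subgroup `A`. -/
def IsAdmissiblePair {G : Type*} [Group G] (ω : G → G → G → ℂˣ) (A : Subgroup G)
    (τ : A → G → ℂˣ) (ν : A → (G →* ℂˣ)) : Prop :=
  (∀ x, τ 1 x = 1) ∧ (∀ a, τ a 1 = 1) ∧
  (∀ (a : A) (x y : G), theta ω (a : G) x y = τ a x * τ a y / τ a (x * y)) ∧
  (ν 1 = 1) ∧
  (∀ (a b : A) (g : G),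
    theta ω g (a : G) (b : G) * (τ a g * τ b g / τ (a * b) g)
      = ν a g * ν b g / ν (a * b) g)

lemma cjg_eq_of_comm {G : Type*} [Group G] {g x : G} (h : g * x = x * g) : cjg g x = g := by
  unfold cjg; rw [mul_assoc, h, ← mul_assoc, inv_mul_cancel, one_mul]

lemma cjg_by_central {G : Type*} [Group G] {x : G} (hx : x ∈ Subgroup.center G) (g : G) :
    cjg g x = g := cjg_eq_of_comm (Subgroup.mem_center_iff.mp hx g)

lemma cjg_of_central {G : Type*} [Group G] {g : G} (hg : g ∈ Subgroup.center G) (x : G) :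
    cjg g x = g := cjg_eq_of_comm (Subgroup.mem_center_iff.mp hg x).symm

lemma theta_cocycle_central {E : Type*} [Group E] {ω : E → E → E → ℂˣ}
    (hω : IsNormalized3Cocycle ω) {g : E} (hg : g ∈ Subgroup.center E) :
    Is2Cocycle (theta ω g) := by
  obtain ⟨hc, hn⟩ := hω
  have hgc : ∀ t : E, g * t = t * g := fun t => (Subgroup.mem_center_iff.mp hg t).symm
  constructor
  · intro x
    constructor
    · simp [theta, cjg_of_central hg, hn g x 1 (by tauto), hn x 1 g (by tauto),
        hn x g 1 (by tauto)]
    · simp [theta, cjg_of_central hg, hn g 1 x (by tauto), hn 1 x g (by tauto),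
        hn 1 g x (by tauto)]
  · intro x y z
    simp only [theta, cjg_of_central hg]
    have h1 := hc g x y z; rw [hgc x] at h1
    have h2 := hc x g y z; rw [hgc y] at h2
    have h3 := hc x y g z; rw [hgc z] at h3
    have h4 := hc x y z g
    have key : (ω x y z * ω g (x*y) z * ω g x y) *
        ((ω y g z * ω x (y*g) z * ω x y g) *
        ((ω (x*g) y z * ω x g (y*z)) * (ω (x*y) z g * ω x y (z*g))))
      = (ω (x*g) y z * ω g x (y*z)) *
        ((ω (x*y) g z * ω x y (z*g)) *
        ((ω g y z * ω x (y*g) z * ω x g y) * (ω y z g * ω x (y*z) g * ω x y z))) := by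
      rw [h1, h3, ← h2, ← h4]
    rw [div_mul_div_comm, div_mul_div_comm, div_eq_div_iff_mul_eq_mul,
      ← mul_left_inj ((ω (x*g) y z * ω g x (y*z)) *
        ((ω (x*y) g z * ω x y (z*g)) *
        ((ω g y z * ω x (y*g) z * ω x g y) * (ω y z g * ω x (y*z) g * ω x y z)))),
      Units.ext_iff]
    push_cast
    have keyC := congrArg Units.val key
    push_cast at keyC
    linear_combination ((ω g y z : ℂ) * (ω y z g : ℂ) * (ω g x (y*z) : ℂ) * (ω x (y*z) g : ℂ)
      * (ω x g y : ℂ) * (ω (x*y) g z : ℂ)) * keyC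

lemma theta_T {E : Type*} [Group E] {ω : E → E → E → ℂˣ}
    (hω : IsNormalized3Cocycle ω) {a b : E} (ha : a ∈ Subgroup.center E)
    (hb : b ∈ Subgroup.center E) (g h : E) :
    theta ω (g*h) a b * theta ω (a*b) g h
      = theta ω g a b * (theta ω h a b * (theta ω a g h * theta ω b g h)) := by
  obtain ⟨hc, hn⟩ := hω
  have hab : a * b ∈ Subgroup.center E := mul_mem ha hb
  have eag : a*g = g*a := (Subgroup.mem_center_iff.mp ha g).symm
  have eah : a*h = h*a := (Subgroup.mem_center_iff.mp ha h).symm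
  have ebg : b*g = g*b := (Subgroup.mem_center_iff.mp hb g).symm
  have ebh : b*h = h*b := (Subgroup.mem_center_iff.mp hb h).symm
  simp only [theta, cjg_by_central ha, cjg_by_central hb, cjg_by_central hab,
    cjg_of_central ha, cjg_of_central hb, cjg_of_central hab]
  have hS1 := hc a b g h; rw [ebg] at hS1
  have hS2 := hc a g b h; rw [eag, ebh] at hS2
  have hS3 := hc a g h b; rw [eag] at hS3
  have hS4 := hc g a b h; rw [ebh] at hS4
  have hS5 := hc g a h b; rw [eah] at hS5
  have hS6 := hc g h a b
  have key : (ω g b h * ω a (g*b) h * ω a g b) * ((ω a h b * ω g (h*a) b * ω g a h) *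
      ((ω (a*b) g h * ω a b (g*h)) * ((ω (g*a) h b * ω a g (h*b)) *
       ((ω (g*a) b h * ω g a (h*b)) * (ω (g*h) a b * ω g h (a*b))))))
    = (ω (g*a) b h * ω a g (h*b)) * ((ω (g*a) h b * ω g a (h*b)) *
      ((ω b g h * ω a (g*b) h * ω a b g) * ((ω g h b * ω a (g*h) b * ω a g h) *
       ((ω a b h * ω g (a*b) h * ω g a b) * (ω h a b * ω g (h*a) b * ω g h a))))) := by
    rw [hS2, hS5, ← hS1, ← hS3, ← hS4, ← hS6]
  rw [div_mul_div_comm, div_mul_div_comm, div_mul_div_comm, div_mul_div_comm,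
    div_eq_div_iff_mul_eq_mul,
    ← mul_left_inj ((ω (g*a) b h * ω a g (h*b)) * ((ω (g*a) h b * ω g a (h*b)) *
      ((ω b g h * ω a (g*b) h * ω a b g) * ((ω g h b * ω a (g*h) b * ω a g h) *
       ((ω a b h * ω g (a*b) h * ω g a b) * (ω h a b * ω g (h*a) b * ω g h a)))))),
    Units.ext_iff]
  push_cast
  have keyC := congrArg Units.val key
  push_cast at keyC
  linear_combination ((ω g a b : ℂ) * (ω a b g : ℂ) * (ω h a b : ℂ) * (ω a b h : ℂ)
    * (ω a g h : ℂ) * (ω g h a : ℂ) * (ω b g h : ℂ) * (ω g h b : ℂ)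
    * (ω a (g*h) b : ℂ) * (ω g (a*b) h : ℂ)) * keyC

section CExt
variable {E : Type} [Group E]

@[ext] structure CExt (β : E → E → ℂˣ) (hβ : Is2Cocycle β) : Type where
  u : ℂˣ
  e : E

variable {β : E → E → ℂˣ} {hβ : Is2Cocycle β}

instance : Mul (CExt β hβ) := ⟨fun p q => ⟨p.u * q.u * β p.e q.e, p.e * q.e⟩⟩
instance : One (CExt β hβ) := ⟨⟨1, 1⟩⟩
instance : Inv (CExt β hβ) := ⟨fun p => ⟨(p.u * β p.e p.e⁻¹)⁻¹, p.e⁻¹⟩⟩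

lemma CExt.mul_u (p q : CExt β hβ) : (p * q).u = p.u * q.u * β p.e q.e := rfl
lemma CExt.mul_e (p q : CExt β hβ) : (p * q).e = p.e * q.e := rfl
lemma CExt.one_u : (1 : CExt β hβ).u = 1 := rfl
lemma CExt.one_e : (1 : CExt β hβ).e = 1 := rfl

instance : Group (CExt β hβ) := Group.ofLeftAxioms
  (fun p q r => by
    refine CExt.ext ?_ ?_
    · show (p.u * q.u * β p.e q.e) * r.u * β (p.e*q.e) r.e
        = p.u * (q.u * r.u * β q.e r.e) * β p.e (q.e*r.e)
      have h := hβ.2 p.e q.e r.e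
      rw [Units.ext_iff] at h ⊢; push_cast at h ⊢
      linear_combination ((p.u : ℂ) * (q.u : ℂ) * (r.u : ℂ)) * h
    · show (p.e * q.e) * r.e = p.e * (q.e * r.e); exact mul_assoc _ _ _)
  (fun p => by
    refine CExt.ext ?_ ?_
    · show 1 * p.u * β 1 p.e = p.u; rw [(hβ.1 p.e).2]; simp
    · show 1 * p.e = p.e; simp)
  (fun p => by
    have h := hβ.2 p.e p.e⁻¹ p.e
    rw [mul_inv_cancel, inv_mul_cancel, (hβ.1 _).1, (hβ.1 _).2, mul_one, mul_one] at h
    refine CExt.ext ?_ ?_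
    · show (p.u * β p.e p.e⁻¹)⁻¹ * p.u * β p.e⁻¹ p.e = 1
      rw [← h]; group
    · show p.e⁻¹ * p.e = 1; simp)

def CExt.proj : CExt β hβ →* E where
  toFun p := p.e
  map_one' := rfl
  map_mul' _ _ := rfl

lemma CExt.proj_surjective : Function.Surjective (CExt.proj (β := β) (hβ := hβ)) :=
  fun e => ⟨⟨1, e⟩, rfl⟩

lemma CExt.central_of_e_one (p : CExt β hβ) (hp : p.e = 1) :
    ∀ q : CExt β hβ, q * p = p * q := by
  intro q
  refine CExt.ext ?_ ?_
  · show q.u * p.u * β q.e p.e = p.u * q.u * β p.e q.e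
    rw [hp, (hβ.1 q.e).1, (hβ.1 q.e).2, mul_one, mul_one, mul_comm]
  · show q.e * p.e = p.e * q.e; rw [hp, mul_one, one_mul]

end CExt

lemma subgroup_eq_of_le_of_card_le {G : Type*} [Group G] {H K : Subgroup G} [Finite K]
    (h : H ≤ K) (hc : Nat.card K ≤ Nat.card H) : H = K := by
  have hinj := Subgroup.inclusion_injective h
  have : Finite ↥H := Finite.of_injective _ (Subgroup.inclusion_injective h)
  have hb : Function.Bijective (Subgroup.inclusion h) :=
    (Nat.bijective_iff_injective_and_card _).mpr
      ⟨hinj, le_antisymm (Nat.card_le_card_of_injective _ hinj) hc⟩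
  ext x
  refine ⟨fun hx => h hx, fun hx => ?_⟩
  obtain ⟨⟨y, hy⟩, hxy⟩ := hb.2 ⟨x, hx⟩
  have h2 : y = x := congrArg Subtype.val hxy
  exact h2 ▸ hy

lemma cobound_of_bounded_cocycle {G E : Type} [Group G] [Finite G] [Group E] [Finite E]
    (hEperf : commutator E = ⊤) (π : E →* G)
    (hsurj : Function.Surjective π) (hker : π.ker ≤ Subgroup.center E)
    (hmax : ∀ (F : Type) [Group F] [Finite F] (π' : F →* G),
      Function.Surjective π' → π'.ker ≤ Subgroup.center F ⊓ commutator F →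
      Nat.card F ≤ Nat.card E)
    {β : E → E → ℂˣ} (hβ : Is2Cocycle β) {n : ℕ} (hn : 0 < n)
    (hb : ∀ x y, β x y ^ n = 1) : Is2Coboundary β := by
  classical
  have hnz : NeZero n := ⟨hn.ne'⟩
  let K₀ : Subgroup (CExt β hβ) :=
    { carrier := {p | p.u ^ n = 1}
      mul_mem' := by
        intro p q hp hq
        show ((p*q).u)^n = 1
        rw [CExt.mul_u, mul_pow, mul_pow, hp, hq, hb]; simp
      one_mem' := by show ((1 : CExt β hβ).u)^n = 1; rw [CExt.one_u, one_pow]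
      inv_mem' := by
        intro p hp
        show ((p.u * β p.e p.e⁻¹)⁻¹)^n = 1
        rw [inv_pow, mul_pow, hp, hb]; simp }
  have hK₀fin : Finite ↥K₀ := by
    have hinj : Function.Injective
        (fun p : ↥K₀ => ((⟨p.1.u, (mem_rootsOfUnity n _).mpr p.2⟩ : rootsOfUnity n ℂ), p.1.e)) := by
      intro p q hpq
      have h1 : p.1.u = q.1.u := congrArg (fun t => (t.1 : ℂˣ)) hpq
      have h2 : p.1.e = q.1.e := congrArg Prod.snd hpq
      exact Subtype.ext (CExt.ext h1 h2)
    exact Finite.of_injective _ hinj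
  let ρ : ↥K₀ →* E := CExt.proj.comp K₀.subtype
  have hρsurj : Function.Surjective ρ :=
    fun e => ⟨⟨⟨1, e⟩, by show (1:ℂˣ)^n = 1; simp⟩, rfl⟩
  have hexists : ∃ m : ℕ, ∃ H : Subgroup ↥K₀, Subgroup.map ρ H = ⊤ ∧ Nat.card ↥H = m :=
    ⟨_, ⊤, by rw [← MonoidHom.range_eq_map]; exact MonoidHom.range_eq_top.mpr hρsurj, rfl⟩
  obtain ⟨H, hHtop, hHcard⟩ := Nat.find_spec hexists
  have hcommH : ⁅H, H⁆ = H := by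
    have hle : ⁅H,H⁆ ≤ H := by
      refine Subgroup.commutator_le.mpr ?_
      intro g1 h1 g2 h2
      rw [commutatorElement_def]
      exact mul_mem (mul_mem (mul_mem h1 h2) (inv_mem h1)) (inv_mem h2)
    have htop2 : Subgroup.map ρ ⁅H,H⁆ = ⊤ := by
      rw [Subgroup.map_commutator, hHtop, ← commutator_def, hEperf]
    have hge : Nat.find hexists ≤ Nat.card ↥⁅H,H⁆ :=
      Nat.find_min' hexists ⟨⁅H,H⁆, htop2, rfl⟩
    exact subgroup_eq_of_le_of_card_le hle (hHcard ▸ hge)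
  let p : ↥H →* E := ρ.comp H.subtype
  have hpsurj : Function.Surjective p := by
    intro e
    have he : e ∈ Subgroup.map ρ H := hHtop ▸ Subgroup.mem_top e
    obtain ⟨k, hk, hke⟩ := he
    exact ⟨⟨k, hk⟩, hke⟩
  have hFperf : commutator ↥H = ⊤ := by
    apply Subgroup.map_injective (Subgroup.subtype_injective H)
    rw [commutator_def, Subgroup.map_commutator, ← MonoidHom.range_eq_map,
      Subgroup.range_subtype, hcommH]
  have hkerp_cent : ∀ k : ↥H, p k = 1 → ∀ q : ↥H, q * k = k * q := by
    intro k hk q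
    refine Subtype.ext (Subtype.ext ?_)
    exact CExt.central_of_e_one _ hk _
  set q : ↥H →* G := π.comp p with hq
  have hqsurj : Function.Surjective q := hsurj.comp hpsurj
  have hkerq : q.ker ≤ Subgroup.center ↥H ⊓ commutator ↥H := by
    refine le_inf ?_ (hFperf ▸ le_top)
    have hsub : ⁅q.ker, (⊤ : Subgroup ↥H)⁆ ≤ p.ker := by
      refine Subgroup.commutator_le.mpr ?_
      intro g1 hg1 g2 _
      rw [MonoidHom.mem_ker, map_commutatorElement]
      refine commutatorElement_eq_one_iff_mul_comm.mpr ?_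
      have hgk : p g1 ∈ π.ker := by rwa [MonoidHom.mem_ker, ← MonoidHom.comp_apply, ← hq,
        ← MonoidHom.mem_ker]
      exact (Subgroup.mem_center_iff.mp (hker hgk) (p g2)).symm
    have h1 : ⁅(⁅q.ker, (⊤ : Subgroup ↥H)⁆ : Subgroup ↥H), (⊤ : Subgroup ↥H)⁆ = (⊥ : Subgroup ↥H) := by
      rw [eq_bot_iff]
      refine Subgroup.commutator_le.mpr ?_
      intro g1 hg1 g2 _
      rw [Subgroup.mem_bot]
      refine commutatorElement_eq_one_iff_mul_comm.mpr ?_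
      exact (hkerp_cent g1 (hsub hg1) g2).symm
    have h2 : ⁅(⁅(⊤ : Subgroup ↥H), q.ker⁆ : Subgroup ↥H), (⊤ : Subgroup ↥H)⁆ = (⊥ : Subgroup ↥H) := by
      rw [Subgroup.commutator_comm (⊤ : Subgroup ↥H) q.ker]; exact h1
    have h3 := Subgroup.commutator_commutator_eq_bot_of_rotate h2 h1
    rw [← commutator_def, hFperf] at h3
    intro k hk
    refine Subgroup.mem_center_iff.mpr fun g => ?_
    have hm :=
      Subgroup.commutator_mem_commutator (Subgroup.mem_top g) hk
    rw [h3, Subgroup.mem_bot] at hm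
    exact commutatorElement_eq_one_iff_mul_comm.mp hm
  have hcard : Nat.card ↥H ≤ Nat.card E := hmax ↥H q hqsurj hkerq
  have hbij : Function.Bijective p :=
    (Nat.bijective_iff_surjective_and_card p).mpr
      ⟨hpsurj, le_antisymm hcard (Nat.card_le_card_of_surjective p hpsurj)⟩
  set φ := MulEquiv.ofBijective p hbij with hφ
  let σ : E → CExt β hβ := fun x => ((φ.symm x : ↥K₀) : CExt β hβ)
  have hσe : ∀ x, (σ x).e = x := fun x => φ.apply_symm_apply x
  have hσmul : ∀ x y, σ x * σ y = σ (x*y) := by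
    intro x y
    show _ = ((((φ.symm (x*y) : ↥H) : ↥K₀)) : CExt β hβ)
    rw [map_mul φ.symm x y]
    rfl
  refine ⟨fun x => ((σ x).u)⁻¹, ?_, ?_⟩
  · have h1 : φ.symm 1 = 1 := map_one φ.symm
    show ((σ 1).u)⁻¹ = 1
    have : σ 1 = 1 := by show ((((φ.symm 1 : ↥H) : ↥K₀)) : CExt β hβ) = 1; rw [h1]; rfl
    rw [this, CExt.one_u, inv_one]
  · intro x y
    have hu := congrArg CExt.u (hσmul x y)
    rw [CExt.mul_u, hσe, hσe] at hu
    rw [Units.ext_iff] at hu ⊢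
    push_cast at hu ⊢
    field_simp
    linear_combination hu

lemma exists_pow_root (n : ℕ) (hn : 0 < n) (u : ℂˣ) : ∃ v : ℂˣ, v ^ n = u := by
  obtain ⟨z, hz⟩ := IsAlgClosed.exists_pow_nat_eq (u : ℂ) hn
  have hz0 : z ≠ 0 := by
    rintro rfl
    rw [zero_pow hn.ne'] at hz
    exact u.ne_zero hz.symm
  exact ⟨Units.mk0 z hz0, by ext; push_cast; exact hz⟩

lemma reduce_to_bounded {E : Type} [Group E] [Finite E] {β : E → E → ℂˣ}
    (hβ : Is2Cocycle β) :
    ∃ (f : E → ℂˣ) (β' : E → E → ℂˣ), f 1 = 1 ∧ Is2Cocycle β' ∧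
      (∀ x y, β' x y ^ (Nat.card E) = 1) ∧
      (∀ x y, β x y = β' x y * (f x * f y) / f (x * y)) := by
  classical
  have : Fintype E := Fintype.ofFinite E
  set n := Nat.card E with hncard
  have hn : 0 < n := Nat.card_pos
  set P : E → ℂˣ := fun x => ∏ y : E, β x y with hPdef
  have hP : ∀ x y, β x y ^ n * P (x*y) = P x * P y := by
    intro x y
    have key : (∏ z : E, (β x y * β (x*y) z)) = ∏ z : E, (β y z * β x (y*z)) :=
      Finset.prod_congr rfl (fun z _ => hβ.2 x y z)
    rw [Finset.prod_mul_distrib, Finset.prod_mul_distrib, Finset.prod_const] at key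
    have hre : (∏ z : E, β x (y*z)) = ∏ z : E, β x z := by
      have := Equiv.prod_comp (Equiv.mulLeft y) (fun z => β x z)
      simpa using this
    rw [hre] at key
    rw [hncard, Nat.card_eq_fintype_card, ← Finset.card_univ]
    rw [hPdef]
    simp only []
    rw [key, mul_comm]
  have hP1 : P 1 = 1 := by
    rw [hPdef]
    simp only []
    rw [Finset.prod_congr rfl (fun y _ => (hβ.1 y).2), Finset.prod_const_one]
  choose r hr using fun x => exists_pow_root n hn (P x)
  set f : E → ℂˣ := fun x => if x = 1 then 1 else r x with hfdef
  have hf1 : f 1 = 1 := by rw [hfdef]; simp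
  have hfP : ∀ x, f x ^ n = P x := by
    intro x
    rw [hfdef]
    by_cases hx : x = 1
    · subst hx; simpa [hP1]
    · simp [hx, hr x]
  set β' : E → E → ℂˣ := fun x y => β x y * f (x*y) / (f x * f y) with hβ'def
  have hβ'n : ∀ x y, β' x y ^ n = 1 := by
    intro x y
    rw [hβ'def]
    simp only []
    rw [div_pow, mul_pow, mul_pow, hfP, hfP, hfP, hP]
    exact div_self' _
  have hβ'norm : ∀ x, β' x 1 = 1 ∧ β' 1 x = 1 := by
    intro x
    constructor
    · rw [hβ'def]; simp [(hβ.1 x).1, hf1]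
    · rw [hβ'def]; simp [(hβ.1 x).2, hf1]
  have hβ'coc : Is2Cocycle β' := by
    refine ⟨hβ'norm, fun x y z => ?_⟩
    have h := hβ.2 x y z
    rw [hβ'def]
    simp only [← mul_assoc]
    rw [Units.ext_iff] at h ⊢
    push_cast at h ⊢
    field_simp
    ring_nf
    ring_nf at h
    linear_combination h
  refine ⟨f, β', hf1, hβ'coc, hβ'n, fun x y => ?_⟩
  rw [hβ'def]
  simp only []
  rw [Units.ext_iff]
  push_cast
  field_simp

theorem representation_group_admissible
    {G E : Type} [Group G] [Finite G] [Group E] [Finite E]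
    (hG : commutator G = ⊤)
    (π : E →* G) (hsurj : Function.Surjective π)
    (hstem : π.ker ≤ Subgroup.center E ⊓ commutator E)
    (hmax : ∀ (F : Type) [Group F] [Finite F] (π' : F →* G),
      Function.Surjective π' → π'.ker ≤ Subgroup.center F ⊓ commutator F →
      Nat.card F ≤ Nat.card E)
    (ω : E → E → E → ℂˣ) (hω : IsNormalized3Cocycle ω) :
    (∀ B : Subgroup E, B ≤ Subgroup.center E →
      ∃ (τ : ↥B → E → ℂˣ) (ν : ↥B → (E →* ℂˣ)), IsAdmissiblePair ω B τ ν) ∧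
    (∀ g ∈ Subgroup.center E, Is2Coboundary (theta ω g)) := by
  classical
  have hEperf : commutator E = ⊤ := by
    have hmap : Subgroup.map π (commutator E) = ⊤ := by
      rw [commutator_def, Subgroup.map_commutator, ← MonoidHom.range_eq_map,
        MonoidHom.range_eq_top.mpr hsurj, ← commutator_def, hG]
    rw [eq_top_iff]
    intro e _
    have he : π e ∈ Subgroup.map π (commutator E) := by rw [hmap]; trivial
    obtain ⟨c, hc, hce⟩ := he
    have hke : c⁻¹ * e ∈ π.ker := by
      rw [MonoidHom.mem_ker, map_mul, map_inv, hce]; simp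
    have h2 : c⁻¹ * e ∈ commutator E := (hstem hke).2
    have h3 := mul_mem hc h2
    simpa using h3
  have hker : π.ker ≤ Subgroup.center E := fun x hx => (hstem hx).1
  have hcob : ∀ g ∈ Subgroup.center E, Is2Coboundary (theta ω g) := by
    intro g hg
    obtain ⟨f, β', hf1, hcoc', hbnd, hfac⟩ := reduce_to_bounded (theta_cocycle_central hω hg)
    obtain ⟨t, ht1, htc⟩ :=
      cobound_of_bounded_cocycle hEperf π hsurj hker hmax hcoc' Nat.card_pos hbnd
    refine ⟨fun x => t x * f x, by show t 1 * f 1 = 1; rw [ht1, hf1, mul_one], fun x y => ?_⟩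
    rw [hfac x y, htc x y]
    rw [Units.ext_iff]
    push_cast
    field_simp
  refine ⟨?_, hcob⟩
  intro B hB
  choose t ht1 htc using fun a : ↥B => hcob (a : E) (hB a.2)
  set τ : ↥B → E → ℂˣ := fun a => if a = 1 then fun _ => 1 else t a with hτ
  have hθ1 : ∀ x y : E, theta ω (1 : E) x y = 1 := by
    intro x y
    have hcj : ∀ u : E, cjg (1 : E) u = 1 := fun u => by simp [cjg]
    simp [theta, hcj, hω.2 1 x y (Or.inl rfl), hω.2 x y 1 (Or.inr (Or.inr rfl)),
      hω.2 x 1 y (Or.inr (Or.inl rfl))]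
  have hτiii : ∀ (a : ↥B) (x y : E), theta ω (a : E) x y = τ a x * τ a y / τ a (x * y) := by
    intro a x y
    by_cases ha : a = 1
    · subst ha
      rw [hτ]
      simp only [if_pos rfl]
      rw [show ((1 : ↥B) : E) = (1 : E) from rfl, hθ1 x y]
      simp
    · rw [hτ]; simp only [if_neg ha]; exact htc a x y
  have hτ1x : ∀ x, τ 1 x = 1 := fun x => by rw [hτ]; simp
  have hτa1 : ∀ a, τ a 1 = 1 := by
    intro a
    by_cases ha : a = 1
    · subst ha; rw [hτ]; simp
    · rw [hτ]; simp only [if_neg ha]; exact ht1 a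
  refine ⟨τ, fun _ => 1, hτ1x, hτa1, hτiii, rfl, ?_⟩
  intro a b g
  have hab : (a : E) * (b : E) ∈ Subgroup.center E := mul_mem (hB a.2) (hB b.2)
  suffices hφ : ∀ g : E, theta ω g (a : E) (b : E) * (τ a g * τ b g / τ (a * b) g) = 1 by
    rw [hφ g]
    simp
  have hone : theta ω (1:E) (a : E) (b : E) * (τ a 1 * τ b 1 / τ (a*b) 1) = 1 := by
    rw [hθ1, hτa1, hτa1, hτa1]; simp
  have hhom : ∀ g h : E,
      theta ω (g*h) (a : E) (b : E) * (τ a (g*h) * τ b (g*h) / τ (a*b) (g*h))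
      = (theta ω g (a : E) (b : E) * (τ a g * τ b g / τ (a*b) g)) *
        (theta ω h (a : E) (b : E) * (τ a h * τ b h / τ (a*b) h)) := by
    intro g h
    have hT := theta_T hω (hB a.2) (hB b.2) g h
    have hCa' : theta ω (a : E) g h * τ a (g*h) = τ a g * τ a h := by
      rw [hτiii a g h]; exact div_mul_cancel _ _
    have hCb' : theta ω (b : E) g h * τ b (g*h) = τ b g * τ b h := by
      rw [hτiii b g h]; exact div_mul_cancel _ _
    have hCab' : theta ω ((a : E) * (b : E)) g h * τ (a*b) (g*h) = τ (a*b) g * τ (a*b) h := by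
      have := hτiii (a*b) g h
      rw [Subgroup.coe_mul] at this
      rw [this]; exact div_mul_cancel _ _
    have key : (theta ω (g*h) (a : E) (b : E) * theta ω ((a : E) * (b : E)) g h) *
        ((theta ω (a : E) g h * τ a (g*h)) * ((theta ω (b : E) g h * τ b (g*h)) *
         (τ (a*b) g * τ (a*b) h)))
      = (theta ω g (a : E) (b : E) * (theta ω h (a : E) (b : E) *
          (theta ω (a : E) g h * theta ω (b : E) g h))) *
        ((τ a g * τ a h) * ((τ b g * τ b h) *
         (theta ω ((a : E) * (b : E)) g h * τ (a*b) (g*h)))) := by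
      rw [hT, hCa', hCb', ← hCab']
    rw [← mul_div_assoc, ← mul_div_assoc, ← mul_div_assoc, div_mul_div_comm,
      div_eq_div_iff_mul_eq_mul,
      ← mul_left_inj ((theta ω g (a : E) (b : E) * (theta ω h (a : E) (b : E) *
          (theta ω (a : E) g h * theta ω (b : E) g h))) *
        ((τ a g * τ a h) * ((τ b g * τ b h) *
         (theta ω ((a : E) * (b : E)) g h * τ (a*b) (g*h))))),
      Units.ext_iff]
    push_cast
    have keyC := congrArg Units.val key
    push_cast at keyC
    linear_combination ((theta ω g (a : E) (b : E) : ℂ) * (τ a g : ℂ) * (τ b g : ℂ) *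
      (theta ω h (a : E) (b : E) : ℂ) * (τ a h : ℂ) * (τ b h : ℂ) * (τ (a*b) (g*h) : ℂ)) * keyC
  let M : E →* ℂˣ :=
    { toFun := fun g => theta ω g (a : E) (b : E) * (τ a g * τ b g / τ (a*b) g)
      map_one' := hone
      map_mul' := hhom }
  have hker2 : commutator E ≤ M.ker := by
    rw [commutator_def]
    refine Subgroup.commutator_le.mpr ?_
    intro g1 _ g2 _
    rw [MonoidHom.mem_ker, map_commutatorElement]
    exact commutatorElement_eq_one_iff_mul_comm.mpr (mul_comm _ _)
  intro g
  exact hker2 (hEperf ▸ Subgroup.mem_top g)
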